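/- Assume κ⁰ > 0, κ¹ > 0 and that the pair is nondegenerate. Then for all indices i ≠ i_* and j ≠ j_*, the function σ_{i,j} admits a zero in (0,∞) if and only if either (j < j_* and i > i_*), in which case σ_{i,j} is strictly increasing on (0,∞), or (j > j_* and i < i_*), in which case σ_{i,j} is strictly decreasing on (0,∞). -/

import Mathlib

theorem stmt_2
    (m : ℕ) (hm : 3 ≤ m)
    (κ₀ κ₁ : ℝ)
    (ρ₀ ρ₁ : ℕ → ℝ)
    (hρ₀one : ρ₀ 1 = 0) (hρ₁one : ρ₁ 1 = 0)
    (hρ₀mono : ∀ i j : ℕ, 1 ≤ i → i < j → ρ₀ i < ρ₀ j)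
    (hρ₁mono : ∀ i j : ℕ, 1 ≤ i → i < j → ρ₁ i < ρ₁ j)
    (hρ₀unb : ∀ C : ℝ, ∃ i : ℕ, 1 ≤ i ∧ C < ρ₀ i)
    (hρ₁unb : ∀ C : ℝ, ∃ j : ℕ, 1 ≤ j ∧ C < ρ₁ j)
    (σ : ℕ → ℕ → ℝ → ℝ)
    (hσ : ∀ (i j : ℕ) (l : ℝ), 0 < l →
      σ i j l = ρ₀ i + ρ₁ j / l - (κ₀ + κ₁ / l) / ((m : ℝ) - 1))
    (hκ₀ : 0 < κ₀) (hκ₁ : 0 < κ₁)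
    (istar jstar : ℕ)
    (histar1 : 1 ≤ istar) (histar2 : κ₀ / ((m : ℝ) - 1) ≤ ρ₀ istar)
    (histar3 : ∀ i : ℕ, 1 ≤ i → i < istar → ρ₀ i < κ₀ / ((m : ℝ) - 1))
    (hjstar1 : 1 ≤ jstar) (hjstar2 : κ₁ / ((m : ℝ) - 1) ≤ ρ₁ jstar)
    (hjstar3 : ∀ j : ℕ, 1 ≤ j → j < jstar → ρ₁ j < κ₁ / ((m : ℝ) - 1))
    (hnondeg : ¬ (ρ₀ istar = κ₀ / ((m : ℝ) - 1) ∧ ρ₁ jstar = κ₁ / ((m : ℝ) - 1))) :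
    ∀ i j : ℕ, 1 ≤ i → 1 ≤ j → i ≠ istar → j ≠ jstar →
      ((∃ l : ℝ, 0 < l ∧ σ i j l = 0) ↔
        ((j < jstar ∧ istar < i) ∨ (jstar < j ∧ i < istar))) ∧
      (j < jstar ∧ istar < i → StrictMonoOn (σ i j) (Set.Ioi (0 : ℝ))) ∧
      (jstar < j ∧ i < istar → StrictAntiOn (σ i j) (Set.Ioi (0 : ℝ))) := by

  intro i j hi hj hii hjj
  have hm1 : (1:ℝ) < (m:ℝ) := by
    have : (3:ℝ) ≤ (m:ℝ) := by exact_mod_cast hm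
    linarith
  have hm0 : (0:ℝ) < (m:ℝ) - 1 := by linarith
  set A := ρ₀ i - κ₀ / ((m:ℝ)-1) with hA
  set B := ρ₁ j - κ₁ / ((m:ℝ)-1) with hB
  clear_value A B
  have hform : ∀ l : ℝ, 0 < l → σ i j l = A + B / l := by
    intro l hl
    rw [hσ i j l hl, hA, hB]
    field_simp
    ring
  have hAcase : (i < istar ∧ A < 0) ∨ (istar < i ∧ 0 < A) := by
    rcases lt_or_gt_of_ne hii with h | h
    · exact Or.inl ⟨h, by have := histar3 i hi h; rw [hA]; linarith⟩
    · exact Or.inr ⟨h, by have := hρ₀mono istar i histar1 h; rw [hA]; linarith⟩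
  have hBcase : (j < jstar ∧ B < 0) ∨ (jstar < j ∧ 0 < B) := by
    rcases lt_or_gt_of_ne hjj with h | h
    · exact Or.inl ⟨h, by have := hjstar3 j hj h; rw [hB]; linarith⟩
    · exact Or.inr ⟨h, by have := hρ₁mono jstar j hjstar1 h; rw [hB]; linarith⟩
  refine ⟨?_, ?_, ?_⟩
  · constructor
    · rintro ⟨l, hl, hzero⟩
      rw [hform l hl] at hzero
      rcases hAcase with ⟨hlt, hAs⟩ | ⟨hlt, hAs⟩ <;>
        rcases hBcase with ⟨hlt', hBs⟩ | ⟨hlt', hBs⟩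
      · exfalso
        have : B / l < 0 := div_neg_of_neg_of_pos hBs hl
        linarith
      · exact Or.inr ⟨hlt', hlt⟩
      · exact Or.inl ⟨hlt', hlt⟩
      · exfalso
        have : 0 < B / l := div_pos hBs hl
        linarith
    · rintro (⟨hjlt, hilt⟩ | ⟨hjlt, hilt⟩)
      · have hAs : 0 < A := by
          rcases hAcase with ⟨h, _⟩ | ⟨_, h⟩
          · omega
          · exact h
        have hBs : B < 0 := by
          rcases hBcase with ⟨_, h⟩ | ⟨h, _⟩
          · exact h
          · omega
        refine ⟨-B / A, div_pos (by linarith) hAs, ?_⟩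
        rw [hform _ (div_pos (by linarith) hAs)]
        have hBne : B ≠ 0 := ne_of_lt hBs
        have hAne : A ≠ 0 := ne_of_gt hAs
        have hkey : B / (-B / A) = -A := by
          rw [div_div_eq_mul_div, div_neg, mul_comm, mul_div_assoc, div_self hBne, mul_one]
        rw [hkey]; ring
      · have hAs : A < 0 := by
          rcases hAcase with ⟨_, h⟩ | ⟨h, _⟩
          · exact h
          · omega
        have hBs : 0 < B := by
          rcases hBcase with ⟨h, _⟩ | ⟨_, h⟩
          · omega
          · exact h
        have hlpos : 0 < -B / A := div_pos_of_neg_of_neg (by linarith) hAs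
        refine ⟨-B / A, hlpos, ?_⟩
        rw [hform _ hlpos]
        have hBne : B ≠ 0 := ne_of_gt hBs
        have hAne : A ≠ 0 := ne_of_lt hAs
        have hkey : B / (-B / A) = -A := by
          rw [div_div_eq_mul_div, div_neg, mul_comm, mul_div_assoc, div_self hBne, mul_one]
        rw [hkey]; ring
  · rintro ⟨hjlt, hilt⟩
    have hBs : B < 0 := by
      rcases hBcase with ⟨_, h⟩ | ⟨h, _⟩
      · exact h
      · omega
    intro a ha b hb hab
    simp only [Set.mem_Ioi] at ha hb
    rw [hform a ha, hform b hb]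
    have : B / a < B / b := by
      rw [div_lt_div_iff₀ ha hb]
      exact mul_lt_mul_of_neg_left hab hBs
    linarith
  · rintro ⟨hjlt, hilt⟩
    have hBs : 0 < B := by
      rcases hBcase with ⟨h, _⟩ | ⟨_, h⟩
      · omega
      · exact h
    intro a ha b hb hab
    simp only [Set.mem_Ioi] at ha hb
    rw [hform a ha, hform b hb]
    have : B / b < B / a := by
      rw [div_lt_div_iff₀ hb ha]
      exact mul_lt_mul_of_pos_left hab hBs
    linarith
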